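/- Let B be a type with four binary operations a↗b, a↘b, a↖b, a↙b satisfying biquandle axioms (3) and (5), and let n ≥ 2. Then there exists a group homomorphism ρ : VB_n → Equiv.Perm (Fin n → B) such that for each i, ρ(σ_i) is the bijection of n-tuples replacing the pair of entries (a_i, a_{i+1}) by (a_{i+1}↗a_i, a_i↘a_{i+1}) and fixing all other coordinates, and ρ(ν_i) is the bijection transposing coordinates i and i+1. -/
import Mathlib


set_option maxRecDepth 8000
set_option maxHeartbeats 4000000

section VBAux

variable {B : Type*} (ur dr ul dl : B → B → B) {n : ℕ}

/-- σ_i action on tuples. -/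
def vbS (i : Fin (n - 1)) (f : Fin n → B) : Fin n → B := fun j : Fin n =>
  if j = (⟨i.1, by have := i.isLt; omega⟩ : Fin n) then
    ur (f ⟨i.1 + 1, by have := i.isLt; omega⟩) (f ⟨i.1, by have := i.isLt; omega⟩)
  else if j = (⟨i.1 + 1, by have := i.isLt; omega⟩ : Fin n) then
    dr (f ⟨i.1, by have := i.isLt; omega⟩) (f ⟨i.1 + 1, by have := i.isLt; omega⟩)
  else f j

/-- Inverse of the σ_i action. -/
def vbSinv (i : Fin (n - 1)) (f : Fin n → B) : Fin n → B := fun j : Fin n =>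
  if j = (⟨i.1, by have := i.isLt; omega⟩ : Fin n) then
    dl (f ⟨i.1 + 1, by have := i.isLt; omega⟩) (f ⟨i.1, by have := i.isLt; omega⟩)
  else if j = (⟨i.1 + 1, by have := i.isLt; omega⟩ : Fin n) then
    ul (f ⟨i.1, by have := i.isLt; omega⟩) (f ⟨i.1 + 1, by have := i.isLt; omega⟩)
  else f j

variable (ax3a : ∀ a b : B, dl (dr a b) (ur b a) = a)
    (ax3b : ∀ a b : B, ul (ur a b) (dr b a) = a)
    (ax3c : ∀ a b : B, ur (ul a b) (dl b a) = a)
    (ax3d : ∀ a b : B, dr (dl a b) (ul b a) = a)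

/-- σ_i as a permutation. -/
def vbSE (i : Fin (n - 1)) : Equiv.Perm (Fin n → B) where
  toFun := vbS ur dr i
  invFun := vbSinv ul dl i
  left_inv f := by
    funext j
    simp only [vbS, vbSinv]
    split_ifs <;> (try simp only [Fin.ext_iff, Fin.val_mk, not_true] at *) <;>
      first
        | rfl
        | omega
        | (rw [ax3a]; apply congrArg; apply Fin.eq_of_val_eq; simp only [Fin.val_mk]; omega)
        | (rw [ax3b]; apply congrArg; apply Fin.eq_of_val_eq; simp only [Fin.val_mk]; omega)
  right_inv f := by
    funext j
    simp only [vbS, vbSinv]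
    split_ifs <;> (try simp only [Fin.ext_iff, Fin.val_mk, not_true] at *) <;>
      first
        | rfl
        | omega
        | (rw [ax3c]; apply congrArg; apply Fin.eq_of_val_eq; simp only [Fin.val_mk]; omega)
        | (rw [ax3d]; apply congrArg; apply Fin.eq_of_val_eq; simp only [Fin.val_mk]; omega)

/-- ν_i as a permutation. -/
def vbVE (n : ℕ) (B : Type*) (i : Fin (n - 1)) : Equiv.Perm (Fin n → B) where
  toFun f := f ∘ Equiv.swap (⟨i.1, by have := i.isLt; omega⟩ : Fin n)
      (⟨i.1 + 1, by have := i.isLt; omega⟩ : Fin n)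
  invFun f := f ∘ Equiv.swap (⟨i.1, by have := i.isLt; omega⟩ : Fin n)
      (⟨i.1 + 1, by have := i.isLt; omega⟩ : Fin n)
  left_inv f := by funext j; simp [Equiv.swap_apply_self]
  right_inv f := by funext j; simp [Equiv.swap_apply_self]

end VBAux

section VBRels

variable {B : Type*} {n : ℕ} {ur dr ul dl : B → B → B}
variable {ax3a : ∀ a b : B, dl (dr a b) (ur b a) = a}
    {ax3b : ∀ a b : B, ul (ur a b) (dr b a) = a}
    {ax3c : ∀ a b : B, ur (ul a b) (dl b a) = a}
    {ax3d : ∀ a b : B, dr (dl a b) (ul b a) = a}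

local notation "S" => vbSE ur dr ul dl ax3a ax3b ax3c ax3d
local notation "V" => vbVE n B

lemma vbV_sq (i : Fin (n - 1)) : V i * V i = 1 := by
  apply Equiv.ext; intro f
  funext j
  simp [vbVE, Equiv.swap_apply_self]

lemma vbV_comm (i k : Fin (n - 1)) (h : 1 < Nat.dist i.1 k.1) :
    V i * V k = V k * V i := by
  apply Equiv.ext; intro f
  funext j
  rw [Nat.dist] at h
  simp only [vbVE, Equiv.Perm.mul_apply, Equiv.coe_fn_mk, Function.comp_apply,
    Equiv.swap_apply_def]
  split_ifs <;> (try simp only [Fin.ext_iff, Fin.val_mk, not_true] at *) <;>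
    first
      | rfl
      | omega
      | (apply congrArg; apply Fin.eq_of_val_eq; simp only [Fin.val_mk]; omega)

lemma vbV_braid (i k : Fin (n - 1)) (h : (k : ℕ) = (i : ℕ) + 1) :
    V i * V k * V i = V k * V i * V k := by
  obtain ⟨kv, hk⟩ := k
  simp only at h
  subst h
  apply Equiv.ext; intro f
  funext j
  simp only [vbVE, Equiv.Perm.mul_apply, Equiv.coe_fn_mk, Function.comp_apply,
    Equiv.swap_apply_def]
  split_ifs <;> (try simp only [Fin.ext_iff, Fin.val_mk, not_true] at *) <;>
    first
      | rfl
      | omega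
      | (apply congrArg; apply Fin.eq_of_val_eq; simp only [Fin.val_mk]; omega)

lemma vbS_comm (i k : Fin (n - 1)) (h : 1 < Nat.dist i.1 k.1) :
    S i * S k = S k * S i := by
  apply Equiv.ext; intro f
  funext j
  rw [Nat.dist] at h
  simp only [vbSE, vbS, Equiv.Perm.mul_apply, Equiv.coe_fn_mk]
  split_ifs <;> (try simp only [Fin.ext_iff, Fin.val_mk, not_true] at *) <;>
    first
      | rfl
      | omega
      | (apply congrArg; apply Fin.eq_of_val_eq; simp only [Fin.val_mk]; omega)
      | (congr 1 <;> apply congrArg <;> apply Fin.eq_of_val_eq <;>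
          simp only [Fin.val_mk] <;> omega)

lemma vbSV_comm (i k : Fin (n - 1)) (h : 1 < Nat.dist i.1 k.1) :
    S i * V k = V k * S i := by
  apply Equiv.ext; intro f
  funext j
  rw [Nat.dist] at h
  simp only [vbSE, vbS, vbVE, Equiv.Perm.mul_apply, Equiv.coe_fn_mk,
    Function.comp_apply, Equiv.swap_apply_def]
  split_ifs <;> (try simp only [Fin.ext_iff, Fin.val_mk, not_true] at *) <;>
    first
      | rfl
      | omega
      | (apply congrArg; apply Fin.eq_of_val_eq; simp only [Fin.val_mk]; omega)
      | (congr 1 <;> apply congrArg <;> apply Fin.eq_of_val_eq <;>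
          simp only [Fin.val_mk] <;> omega)

lemma vbSV_mixed (i k : Fin (n - 1)) (h : (k : ℕ) = (i : ℕ) + 1) :
    S i * V k * V i = V k * V i * S k := by
  obtain ⟨kv, hk⟩ := k
  simp only at h
  subst h
  apply Equiv.ext; intro f
  funext j
  simp only [vbSE, vbS, vbVE, Equiv.Perm.mul_apply, Equiv.coe_fn_mk,
    Function.comp_apply, Equiv.swap_apply_def]
  split_ifs <;> (try simp only [Fin.ext_iff, Fin.val_mk, not_true] at *) <;>
    first
      | rfl
      | omega
      | (apply congrArg; apply Fin.eq_of_val_eq; simp only [Fin.val_mk]; omega)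
      | (congr 1 <;> apply congrArg <;> apply Fin.eq_of_val_eq <;>
          simp only [Fin.val_mk] <;> omega)

lemma vbS_braid
    (ax5a : ∀ a b c : B, ur (ur a b) c = ur (ur a (dr c b)) (ur b c))
    (ax5b : ∀ a b c : B, dr (dr a b) c = dr (dr a (ur c b)) (dr b c))
    (ax5c : ∀ a b c : B, ur (dr a b) (dr c (ur b a)) = dr (ur a c) (ur b (dr c a)))
    (i k : Fin (n - 1)) (h : (k : ℕ) = (i : ℕ) + 1) :
    S i * S k * S i = S k * S i * S k := by
  obtain ⟨kv, hk⟩ := k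
  simp only at h
  subst h
  apply Equiv.ext; intro f
  funext j
  simp only [vbSE, vbS, Equiv.Perm.mul_apply, Equiv.coe_fn_mk]
  split_ifs <;> (try simp only [Fin.ext_iff, Fin.val_mk, not_true] at *) <;>
    first
      | rfl
      | omega
      | (exact ax5a _ _ _)
      | (exact (ax5a _ _ _).symm)
      | (exact ax5b _ _ _)
      | (exact (ax5b _ _ _).symm)
      | (exact ax5c _ _ _)
      | (exact (ax5c _ _ _).symm)
      | (apply congrArg; apply Fin.eq_of_val_eq; simp only [Fin.val_mk]; omega)

end VBRels




/-- Relators of the virtual braid group `VB_n`: generators `Sum.inl i = σ_i` and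
`Sum.inr i = ν_i` for `i : Fin (n-1)`. -/
def virtualBraidRels (n : ℕ) : Set (FreeGroup (Fin (n - 1) ⊕ Fin (n - 1))) :=
  let σ : Fin (n - 1) → FreeGroup (Fin (n - 1) ⊕ Fin (n - 1)) := fun i => FreeGroup.of (Sum.inl i)
  let ν : Fin (n - 1) → FreeGroup (Fin (n - 1) ⊕ Fin (n - 1)) := fun i => FreeGroup.of (Sum.inr i)
  { r | (∃ i k : Fin (n - 1), 1 < Nat.dist i.1 k.1 ∧
          r = σ i * σ k * (σ i)⁻¹ * (σ k)⁻¹) ∨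
        (∃ i j : Fin (n - 1), (j : ℕ) = (i : ℕ) + 1 ∧
          r = σ i * σ j * σ i * (σ j * σ i * σ j)⁻¹) ∨
        (∃ i : Fin (n - 1), r = ν i * ν i) ∨
        (∃ i k : Fin (n - 1), 1 < Nat.dist i.1 k.1 ∧
          r = ν i * ν k * (ν i)⁻¹ * (ν k)⁻¹) ∨
        (∃ i j : Fin (n - 1), (j : ℕ) = (i : ℕ) + 1 ∧
          r = ν i * ν j * ν i * (ν j * ν i * ν j)⁻¹) ∨
        (∃ i k : Fin (n - 1), 1 < Nat.dist i.1 k.1 ∧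
          r = σ i * ν k * (σ i)⁻¹ * (ν k)⁻¹) ∨
        (∃ i j : Fin (n - 1), (j : ℕ) = (i : ℕ) + 1 ∧
          r = σ i * ν j * ν i * (ν j * ν i * σ j)⁻¹) }

/-- The virtual braid group on `n` strands, presented by the generators
`σ_1,…,σ_{n-1}, ν_1,…,ν_{n-1}` and the virtual braid relations. -/
def VirtualBraidGroup (n : ℕ) : Type :=
  PresentedGroup (virtualBraidRels n)

noncomputable instance (n : ℕ) : Group (VirtualBraidGroup n) :=
  inferInstanceAs (Group (PresentedGroup (virtualBraidRels n)))

/-- A biquandle (axioms (3) and (5)) yields a permutation representation of the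
virtual braid group `VB_n` on `n`-tuples: `σ_i` acts by replacing the entries
`(a_i, a_{i+1})` with `(a_{i+1}↗a_i, a_i↘a_{i+1})`, and `ν_i` acts by transposing
the coordinates `i` and `i+1`. -/
theorem virtual_braid_group_biquandle_representation
    (B : Type*) (ur dr ul dl : B → B → B)
    (ax3a : ∀ a b : B, dl (dr a b) (ur b a) = a)
    (ax3b : ∀ a b : B, ul (ur a b) (dr b a) = a)
    (ax3c : ∀ a b : B, ur (ul a b) (dl b a) = a)
    (ax3d : ∀ a b : B, dr (dl a b) (ul b a) = a)
    (ax5a : ∀ a b c : B, ur (ur a b) c = ur (ur a (dr c b)) (ur b c))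
    (ax5b : ∀ a b c : B, dr (dr a b) c = dr (dr a (ur c b)) (dr b c))
    (ax5c : ∀ a b c : B, ur (dr a b) (dr c (ur b a)) = dr (ur a c) (ur b (dr c a)))
    (n : ℕ) (hn : 2 ≤ n) :
    ∃ ρ : VirtualBraidGroup n →* Equiv.Perm (Fin n → B),
      (∀ i : Fin (n - 1), ∀ f : Fin n → B,
        (ρ (PresentedGroup.of (Sum.inl i)) : Equiv.Perm (Fin n → B)) f = fun j : Fin n =>
          if j = (⟨i.1, by have := i.isLt; omega⟩ : Fin n) then
            ur (f ⟨i.1 + 1, by have := i.isLt; omega⟩) (f ⟨i.1, by have := i.isLt; omega⟩)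
          else if j = (⟨i.1 + 1, by have := i.isLt; omega⟩ : Fin n) then
            dr (f ⟨i.1, by have := i.isLt; omega⟩) (f ⟨i.1 + 1, by have := i.isLt; omega⟩)
          else f j) ∧
      (∀ i : Fin (n - 1), ∀ f : Fin n → B,
        (ρ (PresentedGroup.of (Sum.inr i)) : Equiv.Perm (Fin n → B)) f =
          f ∘ (Equiv.swap (⟨i.1, by have := i.isLt; omega⟩ : Fin n)
                (⟨i.1 + 1, by have := i.isLt; omega⟩ : Fin n))) := by
  have hrel : ∀ r ∈ virtualBraidRels n,
      FreeGroup.lift (Sum.elim (vbSE ur dr ul dl ax3a ax3b ax3c ax3d) (vbVE n B)) r = 1 := by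
    intro r hr
    simp only [virtualBraidRels, Set.mem_setOf_eq] at hr
    obtain (⟨i, k, hik, rfl⟩ | ⟨i, k, hik, rfl⟩ | ⟨i, rfl⟩ | ⟨i, k, hik, rfl⟩ |
        ⟨i, k, hik, rfl⟩ | ⟨i, k, hik, rfl⟩ | ⟨i, k, hik, rfl⟩) := hr <;>
      simp only [map_mul, map_inv, FreeGroup.lift_apply_of, Sum.elim_inl, Sum.elim_inr]
    · rw [vbS_comm i k hik]; group
    · rw [vbS_braid ax5a ax5b ax5c i k hik]; group
    · rw [vbV_sq]
    · rw [vbV_comm i k hik]; group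
    · rw [vbV_braid i k hik]; group
    · rw [vbSV_comm i k hik]; group
    · rw [vbSV_mixed i k hik]; group
  refine ⟨PresentedGroup.toGroup hrel, fun i f => ?_, fun i f => ?_⟩
  · exact congrFun (congrArg DFunLike.coe
      (PresentedGroup.toGroup.of (rels := virtualBraidRels n) hrel (x := Sum.inl i))) f
  · exact congrFun (congrArg DFunLike.coe
      (PresentedGroup.toGroup.of (rels := virtualBraidRels n) hrel (x := Sum.inr i))) f
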